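/- Let n < r be positive integers and v₁,…,v_r ∈ ℤⁿ with v_i = e_i for 1 ≤ i ≤ n and v₁+⋯+v_r = 0. Let V ⊆ ℚ(q)[x₁,…,xₙ] be the ℚ(q)-linear span of the polynomials RS_a(x;q), as a ranges over all tuples a ∈ ℤ^r with a_j = 0 for 1 ≤ j ≤ n and P(a)∩ℤⁿ ≠ ∅. Then V is invariant under the Jackson derivatives (d/dx₁)_q, …, (d/dxₙ)_q, and V is indecomposable under them: whenever V = V₁ ⊕ V₂ with V₁ and V₂ ℚ(q)-subspaces each invariant under all of (d/dx₁)_q, …, (d/dxₙ)_q, then V₁ = 0 or V₂ = 0. -/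

import Mathlib

noncomputable section
open MvPolynomial

/-- `(q;q)_d = ∏_{k=1}^d (1 - q^k)` in `ℚ(q)`. -/
def qqPoch (q : RatFunc ℚ) (d : ℕ) : RatFunc ℚ :=
  ∏ k ∈ Finset.range d, (1 - q ^ (k + 1))

/-- The substitution operator `T_{i,q} : f(x₁,…,x_i,…,xₙ) ↦ f(x₁,…,q·x_i,…,xₙ)`. -/
def Tq {n : ℕ} (i : Fin n) (f : MvPolynomial (Fin n) (RatFunc ℚ)) :
    MvPolynomial (Fin n) (RatFunc ℚ) :=
  aeval (fun j : Fin n => if j = i then C RatFunc.X * X j else X j) f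

/-- The `i`-th Jackson (partial `q`-)derivative `(d/dx_i)_q f = (f − T_{i,q} f)/((1−q)x_i)`;
the numerator `f − T_{i,q} f` is exactly divisible by the monomial `x_i`. -/
def jackson {n : ℕ} (i : Fin n) (f : MvPolynomial (Fin n) (RatFunc ℚ)) :
    MvPolynomial (Fin n) (RatFunc ℚ) :=
  C (1 - RatFunc.X : RatFunc ℚ)⁻¹ * ((f - Tq i f).divMonomial (Finsupp.single i 1))

/-- The generalized Rogers–Szegő polynomial
`RS_a(x;q) = Σ_{u ∈ P(a)∩ℤⁿ} [|a|; ⟨u,v₁⟩+a₁,…,⟨u,v_r⟩+a_r]_q x₁^{u₁}⋯xₙ^{uₙ}`,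
where `P(a) = {u ∈ ℝⁿ : ⟨u,v_i⟩ ≥ −a_i for all i}` lies in the nonnegative orthant
(so its lattice points are indexed by `u : Fin n → ℕ`); the sum is a finite sum
(`∑ᶠ`, a finitely supported sum), equal to `0` if `P(a)∩ℤⁿ = ∅`. -/
def RSgen (n r : ℕ) (v : Fin r → Fin n → ℤ) (a : Fin r → ℤ) :
    MvPolynomial (Fin n) (RatFunc ℚ) :=
  ∑ᶠ u : Fin n → ℕ,
    if ∀ i, -(a i) ≤ ∑ j, (u j : ℤ) * v i j then
      monomial (Finsupp.equivFunOnFinite.symm u)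
        (qqPoch RatFunc.X (∑ i, a i).toNat /
          ∏ i, qqPoch RatFunc.X ((∑ j, (u j : ℤ) * v i j) + a i).toNat)
    else 0

end

noncomputable section
set_option linter.unusedSectionVars false
open MvPolynomial

lemma one_sub_X_pow_ne_zero {s : ℕ} (hs : 0 < s) : (1 - RatFunc.X ^ s : RatFunc ℚ) ≠ 0 := by
  intro h
  have h1 : (RatFunc.X : RatFunc ℚ) ^ s = 1 := by linear_combination -h
  have h2 : (algebraMap (Polynomial ℚ) (RatFunc ℚ)) (Polynomial.X ^ s) =
      (algebraMap (Polynomial ℚ) (RatFunc ℚ)) 1 := by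
    simpa [map_pow, RatFunc.algebraMap_X] using h1
  have h3 := RatFunc.algebraMap_injective ℚ h2
  have := congrArg Polynomial.natDegree h3
  simp [Polynomial.natDegree_X_pow] at this
  omega

lemma qqPoch_ne_zero (d : ℕ) : qqPoch RatFunc.X d ≠ 0 := by
  refine Finset.prod_ne_zero_iff.2 fun k _ => one_sub_X_pow_ne_zero (Nat.succ_pos k)

lemma one_sub_X_ne_zero : (1 - RatFunc.X : RatFunc ℚ) ≠ 0 := by
  simpa using one_sub_X_pow_ne_zero (s := 1) one_pos

lemma qqPoch_succ (d : ℕ) :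
    qqPoch RatFunc.X (d + 1) = qqPoch RatFunc.X d * (1 - RatFunc.X ^ (d + 1)) :=
  Finset.prod_range_succ _ _

lemma Tq_monomial {n : ℕ} (i : Fin n) (s : Fin n →₀ ℕ) (c : RatFunc ℚ) :
    Tq i (monomial s c) = monomial s (RatFunc.X ^ s i * c) := by
  rw [Tq, aeval_monomial]
  have h1 : (s.prod fun j k => (if j = i then C RatFunc.X * X j else X j) ^ k) =
      C (RatFunc.X ^ s i) * (monomial s 1 : MvPolynomial (Fin n) (RatFunc ℚ)) := by
    rw [Finsupp.prod]
    have h2 : ∀ j ∈ s.support, (if j = i then C RatFunc.X * X j else X j) ^ s j =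
        C (if j = i then RatFunc.X ^ s j else 1) * (X j : MvPolynomial (Fin n) (RatFunc ℚ)) ^ s j := by
      intro j _
      split <;> simp [mul_pow, C_pow]
    rw [Finset.prod_congr rfl h2, Finset.prod_mul_distrib, ← map_prod]
    have h3 : (∏ j ∈ s.support, if j = i then (RatFunc.X : RatFunc ℚ) ^ s j else 1)
        = RatFunc.X ^ s i := by
      rw [Finset.prod_ite_eq' s.support i (fun j => (RatFunc.X : RatFunc ℚ) ^ s j)]
      split
      · rfl
      · rw [Finsupp.notMem_support_iff.1 ‹_›, pow_zero]
    rw [h3, (monomial_eq (a := (1:RatFunc ℚ)) (s := s)), map_one, one_mul, Finsupp.prod]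
  rw [h1, algebraMap_eq, ← mul_assoc, ← map_mul, C_mul_monomial, mul_one, mul_comm]

lemma coeff_Tq {n : ℕ} (i : Fin n) (f : MvPolynomial (Fin n) (RatFunc ℚ)) (t : Fin n →₀ ℕ) :
    (Tq i f).coeff t = RatFunc.X ^ t i * f.coeff t := by
  have h : Tq i f = ∑ s ∈ f.support, monomial s (RatFunc.X ^ s i * f.coeff s) := by
    conv_lhs => rw [f.as_sum]
    rw [show Tq i (∑ v ∈ f.support, monomial v (coeff v f)) =
        ∑ v ∈ f.support, Tq i (monomial v (coeff v f)) from map_sum _ _ _]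
    exact Finset.sum_congr rfl fun s _ => Tq_monomial i s _
  rw [h, coeff_sum]
  simp only [coeff_monomial]
  rw [Finset.sum_ite_eq' f.support t (fun s => RatFunc.X ^ s i * f.coeff s)]
  split
  · rfl
  · rw [MvPolynomial.notMem_support_iff.1 ‹_›, mul_zero]

lemma coeff_jackson {n : ℕ} (i : Fin n) (f : MvPolynomial (Fin n) (RatFunc ℚ)) (w : Fin n →₀ ℕ) :
    (jackson i f).coeff w = (1 - RatFunc.X)⁻¹ * (1 - RatFunc.X ^ (w i + 1)) *
      f.coeff (w + Finsupp.single i 1) := by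
  rw [jackson, coeff_C_mul, coeff_divMonomial, coeff_sub, coeff_Tq]
  have h1 : Finsupp.single i 1 + w = w + Finsupp.single i 1 := add_comm _ _
  rw [h1]
  simp only [Finsupp.add_apply, Finsupp.single_eq_same]
  ring

lemma jackson_zero {n : ℕ} (i : Fin n) : jackson i (0 : MvPolynomial (Fin n) (RatFunc ℚ)) = 0 := by
  apply MvPolynomial.ext; intro w; simp [coeff_jackson]

lemma jackson_add {n : ℕ} (i : Fin n) (f g : MvPolynomial (Fin n) (RatFunc ℚ)) :
    jackson i (f + g) = jackson i f + jackson i g := by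
  apply MvPolynomial.ext; intro w; simp [coeff_jackson, coeff_add]; ring

lemma jackson_smul {n : ℕ} (i : Fin n) (c : RatFunc ℚ) (f : MvPolynomial (Fin n) (RatFunc ℚ)) :
    jackson i (c • f) = c • jackson i f := by
  apply MvPolynomial.ext; intro w; simp [coeff_jackson, coeff_smul]; ring

lemma one_mem_of_invariant {n : ℕ} (W : Submodule (RatFunc ℚ) (MvPolynomial (Fin n) (RatFunc ℚ)))
    (hW : ∀ f ∈ W, ∀ i : Fin n, jackson i f ∈ W) :
    ∀ k : ℕ, ∀ f ∈ W, f ≠ 0 → f.totalDegree ≤ k → (1 : MvPolynomial (Fin n) (RatFunc ℚ)) ∈ W := by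
  intro k
  induction k with
  | zero =>
    intro f hfW hf0 hdeg
    have hd0 : f.totalDegree = 0 := Nat.le_zero.1 hdeg
    have hall := (totalDegree_eq_zero_iff (Fin n) f).1 hd0
    have hcoeff : ∀ t : Fin n →₀ ℕ, t ≠ 0 → f.coeff t = 0 := by
      intro t ht
      by_contra h
      exact ht (Finsupp.ext fun x => hall t (MvPolynomial.mem_support_iff.2 h) x)
    have hc : f.coeff 0 ≠ 0 := by
      intro h
      apply hf0
      apply MvPolynomial.ext
      intro t
      rcases eq_or_ne t 0 with rfl | ht
      · simpa using h
      · simpa using hcoeff t ht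
    have h1 : (1 : MvPolynomial (Fin n) (RatFunc ℚ)) = (f.coeff 0)⁻¹ • f := by
      apply MvPolynomial.ext
      intro t
      rcases eq_or_ne t 0 with rfl | ht
      · simp [coeff_smul, inv_mul_cancel₀ hc]
      · simp [coeff_smul, hcoeff t ht, coeff_one, Ne.symm ht]
    rw [h1]
    exact Submodule.smul_mem _ _ hfW
  | succ k ih =>
    intro f hfW hf0 hdeg
    rcases Nat.lt_or_ge f.totalDegree (k+1) with h | h
    · exact ih f hfW hf0 (Nat.lt_succ_iff.1 h)
    have hdeq : f.totalDegree = k + 1 := le_antisymm hdeg h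
    have hne : f.support.Nonempty := Finset.nonempty_iff_ne_empty.2 (mt MvPolynomial.support_eq_empty.1 hf0)
    obtain ⟨s, hsmem, hseq⟩ := f.support.exists_mem_eq_sup hne (fun m => m.sum fun _ e => e)
    have hsum : (s.sum fun _ e => e) = k + 1 := by
      rw [← hseq, ← MvPolynomial.totalDegree, hdeq]
    have hex : ∃ i : Fin n, 0 < s i := by
      by_contra hcon
      push_neg at hcon
      have : s = 0 := Finsupp.ext fun x => Nat.le_zero.1 (hcon x)
      rw [this] at hsum
      simp at hsum
    obtain ⟨i, hi⟩ := hex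
    set g := jackson i f with hg
    have hgW : g ∈ W := hW f hfW i
    have hkey : (s - Finsupp.single i 1) + Finsupp.single i 1 = s := by
      ext j
      rcases eq_or_ne j i with rfl | hij
      · simp only [Finsupp.add_apply, Finsupp.tsub_apply, Finsupp.single_eq_same]
        omega
      · simp [Finsupp.single_apply, Ne.symm hij, hij]
    have hg0 : g ≠ 0 := by
      intro h0
      have := coeff_jackson i f (s - Finsupp.single i 1)
      rw [← hg, h0, hkey] at this
      simp only [coeff_zero] at this
      have hfne : f.coeff s ≠ 0 := MvPolynomial.mem_support_iff.1 hsmem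
      have := this.symm
      rcases mul_eq_zero.1 this with h | h
      · rcases mul_eq_zero.1 h with h' | h'
        · exact inv_ne_zero one_sub_X_ne_zero h'
        · exact one_sub_X_pow_ne_zero (Nat.succ_pos _) h'
      · exact hfne h
    have hgdeg : g.totalDegree ≤ k := by
      rw [MvPolynomial.totalDegree]
      apply Finset.sup_le
      intro t htmem
      have hct : g.coeff t ≠ 0 := MvPolynomial.mem_support_iff.1 htmem
      rw [hg, coeff_jackson] at hct
      have hcf : f.coeff (t + Finsupp.single i 1) ≠ 0 := by
        intro h; rw [h, mul_zero] at hct; exact hct rfl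
      have hle : ((t + Finsupp.single i 1).sum fun _ e => e) ≤ k + 1 := by
        rw [← hdeq]
        exact MvPolynomial.le_totalDegree (MvPolynomial.mem_support_iff.2 hcf)
      have hsplit : ((t + Finsupp.single i 1).sum fun _ e => e)
          = (t.sum fun _ e => e) + 1 := by
        rw [Finsupp.sum_add_index' (fun _ => rfl) (fun _ _ _ => rfl),
          Finsupp.sum_single_index rfl]
      omega
    exact ih g hgW hg0 hgdeg

def RSterm (n r : ℕ) (v : Fin r → Fin n → ℤ) (a : Fin r → ℤ) (u : Fin n → ℕ) :
    MvPolynomial (Fin n) (RatFunc ℚ) :=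
  if ∀ i, -(a i) ≤ ∑ j, (u j : ℤ) * v i j then
    monomial (Finsupp.equivFunOnFinite.symm u)
      (qqPoch RatFunc.X (∑ i, a i).toNat /
        ∏ i, qqPoch RatFunc.X ((∑ j, (u j : ℤ) * v i j) + a i).toNat)
  else 0

lemma RSgen_eq (n r : ℕ) (v : Fin r → Fin n → ℤ) (a : Fin r → ℤ) :
    RSgen n r v a = ∑ᶠ u : Fin n → ℕ, RSterm n r v a u := rfl

section KeyLemmas

variable {n r : ℕ} (hnr : n < r) (v : Fin r → Fin n → ℤ)
  (hv : ∀ i : Fin r, (i : ℕ) < n → ∀ j : Fin n, v i j = if (j : ℕ) = (i : ℕ) then 1 else 0)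
  (hsym : ∀ j, ∑ i, v i j = 0)

/-- lift of an index. -/
def castR (hnr : n < r) (i : Fin n) : Fin r := ⟨(i : ℕ), lt_trans i.isLt hnr⟩

include hnr hv hsym

lemma sumK (a : Fin r → ℤ) (u : Fin n → ℕ) :
    ∑ p, ((∑ j, (u j : ℤ) * v p j) + a p) = ∑ p, a p := by
  rw [Finset.sum_add_distrib]
  have h : ∑ p, ∑ j, (u j : ℤ) * v p j = ∑ j, (u j : ℤ) * ∑ p, v p j := by
    rw [Finset.sum_comm]
    exact Finset.sum_congr rfl fun j _ => (Finset.mul_sum _ _ _).symm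
  simp [h, hsym]

lemma lift_row (u : Fin n → ℕ) (i : Fin n) :
    ∑ j, (u j : ℤ) * v (castR hnr i) j = (u i : ℤ) := by
  have hrow : ∀ j : Fin n, v (castR hnr i) j = if j = i then 1 else 0 := by
    intro j
    rw [hv (castR hnr i) (by simpa [castR] using i.isLt) j]
    simp [castR, Fin.ext_iff]
    exact if_congr Iff.rfl rfl rfl
  calc ∑ j, (u j : ℤ) * v (castR hnr i) j
      = ∑ j, (if j = i then (u j : ℤ) else 0) := by
        refine Finset.sum_congr rfl fun j _ => ?_
        rw [hrow j]
        split <;> simp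
    _ = (u i : ℤ) := by rw [Finset.sum_ite_eq' Finset.univ i (fun j => (u j : ℤ))]; simp

lemma cond_bound (a : Fin r → ℤ) (ha : ∀ i : Fin r, (i : ℕ) < n → a i = 0) (u : Fin n → ℕ)
    (hcond : ∀ i, -(a i) ≤ ∑ j, (u j : ℤ) * v i j) (j : Fin n) :
    u j ≤ (∑ i, a i).toNat := by
  have hK : ∀ p : Fin r, 0 ≤ (∑ j, (u j : ℤ) * v p j) + a p := fun p => by
    have := hcond p; omega
  have hs := sumK hnr v hv hsym a u
  have hrow := lift_row hnr v hv hsym u j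
  have haj : a (castR hnr j) = 0 := ha _ (by simpa [castR] using j.isLt)
  have hle : (∑ k, (u k : ℤ) * v (castR hnr j) k) + a (castR hnr j)
      ≤ ∑ p, ((∑ k, (u k : ℤ) * v p k) + a p) :=
    Finset.single_le_sum (fun p _ => hK p) (Finset.mem_univ _)
  rw [hrow, haj, hs] at hle
  omega

lemma RSterm_support (a : Fin r → ℤ) (ha : ∀ i : Fin r, (i : ℕ) < n → a i = 0) :
    (Function.support (RSterm n r v a)).Finite := by
  apply Set.Finite.subset (Set.finite_Icc (fun _ : Fin n => 0) (fun _ => (∑ i, a i).toNat))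
  intro u hu
  have hcond : ∀ i, -(a i) ≤ ∑ j, (u j : ℤ) * v i j := by
    by_contra h
    exact hu (if_neg h)
  exact Set.mem_Icc.2 ⟨fun j => Nat.zero_le _, fun j => cond_bound hnr v hv hsym a ha u hcond j⟩

lemma RSgen_coeff (a : Fin r → ℤ) (ha : ∀ i : Fin r, (i : ℕ) < n → a i = 0) (d : Fin n →₀ ℕ) :
    (RSgen n r v a).coeff d =
      if ∀ i, -(a i) ≤ ∑ j, (d j : ℤ) * v i j then
        qqPoch RatFunc.X (∑ i, a i).toNat /
          ∏ i, qqPoch RatFunc.X ((∑ j, (d j : ℤ) * v i j) + a i).toNat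
      else 0 := by
  have hfin := RSterm_support hnr v hv hsym a ha
  have h1 : (RSgen n r v a).coeff d = ∑ᶠ u, (RSterm n r v a u).coeff d := by
    rw [RSgen_eq]
    exact (coeffAddMonoidHom d).map_finsum hfin
  rw [h1, finsum_eq_single _ (⇑d) ?_]
  · rw [RSterm]
    split
    · rw [Finsupp.equivFunOnFinite_symm_coe, coeff_monomial, if_pos rfl]
    · simp
  · intro u hu
    rw [RSterm]
    split
    · rw [coeff_monomial, if_neg]
      intro h
      exact hu ((Equiv.symm_apply_eq _).1 h)
    · simp


lemma jackson_RSgen (a : Fin r → ℤ) (ha : ∀ i : Fin r, (i : ℕ) < n → a i = 0) (i : Fin n) :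
    jackson i (RSgen n r v a) =
      C ((1 - RatFunc.X ^ (∑ k, a k).toNat) * (1 - RatFunc.X)⁻¹) *
        RSgen n r v (fun p => a p + v p i - (if (p : ℕ) = (i : ℕ) then 1 else 0)) := by
  set a' : Fin r → ℤ := fun p => a p + v p i - (if (p : ℕ) = (i : ℕ) then 1 else 0) with ha'def
  have ha' : ∀ p : Fin r, (p : ℕ) < n → a' p = 0 := by
    intro p hp
    have h1 := ha p hp
    have h2 := hv p hp i
    simp only [ha'def, h1, h2]
    by_cases h : (i : ℕ) = (p : ℕ)
    · rw [if_pos h, if_pos h.symm]; ring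
    · rw [if_neg h, if_neg (fun hh => h hh.symm)]; ring
  apply MvPolynomial.ext
  intro d
  rw [coeff_jackson, coeff_C_mul, RSgen_coeff hnr v hv hsym a ha (d + Finsupp.single i 1),
    RSgen_coeff hnr v hv hsym a' ha' d]
  set d1 : Fin n →₀ ℕ := d + Finsupp.single i 1 with hd1def
  set ihat : Fin r := castR hnr i with hihat
  have hmem : ∀ p : Fin r, ((p : ℕ) = (i : ℕ)) ↔ p = ihat := by
    intro p; rw [Fin.ext_iff]; simp [hihat, castR]
  have hco : ∀ j : Fin n, (d1 j : ℤ)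
      = (d j : ℤ) + (if j = i then 1 else 0) := by
    intro j
    rw [hd1def]
    rcases eq_or_ne j i with rfl | hji
    · simp
    · simp [Finsupp.single_apply, Ne.symm hji, hji]
  have hKrel : ∀ p : Fin r, (∑ j, (d1 j : ℤ) * v p j)
      = (∑ j, (d j : ℤ) * v p j) + v p i := by
    intro p
    have h6 : ∀ j : Fin n, (d1 j : ℤ) * v p j
        = (d j : ℤ) * v p j + (if j = i then v p j else 0) := by
      intro j; rw [hco j]; split <;> ring
    rw [Finset.sum_congr rfl (fun j _ => h6 j), Finset.sum_add_distrib,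
      Finset.sum_ite_eq' Finset.univ i (fun j => v p j), if_pos (Finset.mem_univ i)]
  have hKval : ∀ p : Fin r, (∑ j, (d1 j : ℤ) * v p j) + a p
      = ((∑ j, (d j : ℤ) * v p j) + a' p) + (if (p : ℕ) = (i : ℕ) then 1 else 0) := by
    intro p; rw [hKrel p]; simp only [ha'def]; ring
  have hKihat : (∑ j, (d j : ℤ) * v ihat j) + a' ihat = (d i : ℤ) := by
    rw [hihat, lift_row hnr v hv hsym (⇑d) i, ha' ihat (by simp [hihat, castR])]
    ring
  have hiff : (∀ p : Fin r, -(a p) ≤ ∑ j, (d1 j : ℤ) * v p j)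
      ↔ (∀ p : Fin r, -(a' p) ≤ ∑ j, (d j : ℤ) * v p j) := by
    constructor
    · intro h p
      rcases eq_or_ne p ihat with rfl | hp
      · have h7 := hKihat
        have h8 : (0 : ℤ) ≤ (d i : ℤ) := Int.natCast_nonneg _
        omega
      · have h1 := h p
        have h2 := hKval p
        rw [if_neg (fun hh => hp ((hmem p).1 hh))] at h2
        omega
    · intro h p
      have h1 := h p
      have h2 := hKval p
      have h3 : (0 : ℤ) ≤ if (p : ℕ) = (i : ℕ) then 1 else 0 := by split <;> omega
      omega
  by_cases hcond : ∀ p : Fin r, -(a' p) ≤ ∑ j, (d j : ℤ) * v p j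
  · rw [if_pos hcond, if_pos (hiff.2 hcond)]
    have hKnn : ∀ p, 0 ≤ (∑ j, (d j : ℤ) * v p j) + a' p := fun p => by
      have := hcond p; omega
    set b : Fin r → ℕ := fun p => ((∑ j, (d j : ℤ) * v p j) + a' p).toNat with hbdef
    have hb : ∀ p, ((b p : ℤ)) = (∑ j, (d j : ℤ) * v p j) + a' p := fun p =>
      Int.toNat_of_nonneg (hKnn p)
    have hsum' : ∑ p, ((∑ j, (d j : ℤ) * v p j) + a' p) = ∑ p, a' p :=
      sumK hnr v hv hsym a' (⇑d)
    have hm' : ∑ p, a' p = (∑ p, a p) - 1 := by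
      simp only [ha'def]
      rw [Finset.sum_sub_distrib, Finset.sum_add_distrib, hsym i]
      have h9 : (∑ p : Fin r, if (p : ℕ) = (i : ℕ) then (1 : ℤ) else 0) = 1 := by
        rw [Finset.sum_congr rfl (fun p _ => if_congr (hmem p) rfl rfl),
          Finset.sum_ite_eq' Finset.univ ihat (fun _ => (1 : ℤ)), if_pos (Finset.mem_univ ihat)]
      rw [h9]; ring
    have hMsum : ((∑ p, b p : ℕ) : ℤ) = (∑ p, a p) - 1 := by
      push_cast
      rw [Finset.sum_congr rfl (fun p _ => hb p), hsum', hm']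
    have htoNat1 : (∑ p, a p).toNat = (∑ p, b p) + 1 := by omega
    have htoNat2 : (∑ p, a' p).toNat = ∑ p, b p := by omega
    have hKtoNat : ∀ p, ((∑ j, (d1 j : ℤ) * v p j) + a p).toNat
        = b p + (if p = ihat then 1 else 0) := by
      intro p
      have h2 := hKval p
      have h3 := hb p
      rcases eq_or_ne p ihat with rfl | hp
      · rw [if_pos rfl]
        rw [if_pos ((hmem _).2 rfl)] at h2
        omega
      · rw [if_neg hp]
        rw [if_neg (fun hh => hp ((hmem p).1 hh))] at h2
        omega
    have hbihat : b ihat = d i := by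
      have h2 := hb ihat
      have h3 := hKihat
      omega
    have hprod : (∏ p, qqPoch RatFunc.X
          (((∑ j, (d1 j : ℤ) * v p j) + a p).toNat))
        = (∏ p, qqPoch RatFunc.X (b p)) * (1 - RatFunc.X ^ (b ihat + 1)) := by
      have h5 : ∀ p : Fin r,
          qqPoch RatFunc.X (((∑ j, (d1 j : ℤ) * v p j) + a p).toNat)
          = qqPoch RatFunc.X (b p) * (if p = ihat then (1 - RatFunc.X ^ (b p + 1)) else 1) := by
        intro p
        rw [hKtoNat p]
        rcases eq_or_ne p ihat with rfl | hp
        · rw [if_pos rfl, if_pos rfl, qqPoch_succ]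
        · rw [if_neg hp, if_neg hp, add_zero, mul_one]
      rw [Finset.prod_congr rfl (fun p _ => h5 p), Finset.prod_mul_distrib,
        Finset.prod_ite_eq' Finset.univ ihat (fun p => 1 - RatFunc.X ^ (b p + 1)),
        if_pos (Finset.mem_univ ihat)]
    rw [hprod, htoNat1, htoNat2, qqPoch_succ, ← hbihat]
    have hQ : (∏ p, qqPoch RatFunc.X (b p)) ≠ 0 :=
      Finset.prod_ne_zero_iff.2 fun p _ => qqPoch_ne_zero _
    have hB : (1 - RatFunc.X ^ (b ihat + 1)) ≠ 0 := one_sub_X_pow_ne_zero (Nat.succ_pos _)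
    have hP : qqPoch RatFunc.X (∑ p, b p) ≠ 0 := qqPoch_ne_zero _
    have hX1 : (1 - RatFunc.X : RatFunc ℚ) ≠ 0 := one_sub_X_ne_zero
    rw [show (∏ p, qqPoch RatFunc.X (((∑ j, (d j : ℤ) * v p j) + a' p).toNat)) = ∏ p, qqPoch RatFunc.X (b p) from rfl]
    field_simp
  · rw [if_neg hcond, if_neg (fun h => hcond (hiff.1 h)), mul_zero, mul_zero]
end KeyLemmas


lemma RSgen_eq_zero {n r : ℕ} (v : Fin r → Fin n → ℤ) (a : Fin r → ℤ)
    (h : ¬ ∃ u : Fin n → ℕ, ∀ p, -(a p) ≤ ∑ j, (u j : ℤ) * v p j) :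
    RSgen n r v a = 0 := by
  rw [RSgen_eq]
  have hz : ∀ u, RSterm n r v a u = 0 := fun u => if_neg (fun hc => h ⟨u, hc⟩)
  simp [hz]

lemma shift_zero {n r : ℕ} (v : Fin r → Fin n → ℤ)
    (hv : ∀ i : Fin r, (i : ℕ) < n → ∀ j : Fin n, v i j = if (j : ℕ) = (i : ℕ) then 1 else 0)
    (a : Fin r → ℤ) (ha : ∀ i : Fin r, (i : ℕ) < n → a i = 0) (i : Fin n) :
    ∀ p : Fin r, (p : ℕ) < n →
      (a p + v p i - (if (p : ℕ) = (i : ℕ) then 1 else 0)) = 0 := by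
  intro p hp
  have h1 := ha p hp
  have h2 := hv p hp i
  rw [h1, h2]
  by_cases h : (i : ℕ) = (p : ℕ)
  · rw [if_pos h, if_pos h.symm]; ring
  · rw [if_neg h, if_neg (fun hh => h hh.symm)]; ring

end

/-- The `ℚ(q)`-linear span `V` of the generalized Rogers–Szegő polynomials
`RS_a(x;q)`, over all first-orthant tuples `a` with `P(a)∩ℤⁿ ≠ ∅`, is invariant under the
Jackson derivatives `(d/dx₁)_q,…,(d/dxₙ)_q`, and is indecomposable under them: if
`V = V₁ ⊕ V₂` with `V₁, V₂` invariant subspaces, then `V₁ = 0` or `V₂ = 0`. -/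
theorem stmt6 (n r : ℕ) (hn : 0 < n) (hnr : n < r) (v : Fin r → Fin n → ℤ)
    (hv : ∀ i : Fin r, (i : ℕ) < n → ∀ j : Fin n, v i j = if (j : ℕ) = (i : ℕ) then 1 else 0)
    (hsym : ∀ j, ∑ i, v i j = 0)
    (V : Submodule (RatFunc ℚ) (MvPolynomial (Fin n) (RatFunc ℚ)))
    (hV : V = Submodule.span (RatFunc ℚ)
      {f | ∃ a : Fin r → ℤ, (∀ i : Fin r, (i : ℕ) < n → a i = 0) ∧
        (∃ u : Fin n → ℕ, ∀ i, -(a i) ≤ ∑ j, (u j : ℤ) * v i j) ∧ f = RSgen n r v a}) :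
    (∀ f ∈ V, ∀ i : Fin n, jackson i f ∈ V) ∧
      ∀ V₁ V₂ : Submodule (RatFunc ℚ) (MvPolynomial (Fin n) (RatFunc ℚ)),
        V₁ ≤ V → V₂ ≤ V →
        (∀ f ∈ V₁, ∀ i : Fin n, jackson i f ∈ V₁) →
        (∀ f ∈ V₂, ∀ i : Fin n, jackson i f ∈ V₂) →
        V₁ ⊓ V₂ = ⊥ → V₁ ⊔ V₂ = V → V₁ = ⊥ ∨ V₂ = ⊥ := by
  constructor
  · subst hV
    intro f hf i
    refine Submodule.span_induction (p := fun x _ => jackson i x ∈ Submodule.span (RatFunc ℚ) _)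
      ?_ ?_ ?_ ?_ hf
    · rintro g ⟨a, ha, hw, rfl⟩
      rw [jackson_RSgen hnr v hv hsym a ha i]
      by_cases hw' : ∃ u : Fin n → ℕ, ∀ p, -(a p + v p i - (if (p : ℕ) = (i : ℕ) then 1 else 0))
          ≤ ∑ j, (u j : ℤ) * v p j
      · rw [← MvPolynomial.smul_eq_C_mul]
        exact Submodule.smul_mem _ _ (Submodule.subset_span
          ⟨fun p => a p + v p i - (if (p : ℕ) = (i : ℕ) then 1 else 0),
            shift_zero v hv a ha i, hw', rfl⟩)
      · rw [RSgen_eq_zero v _ hw', mul_zero]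
        exact Submodule.zero_mem _
    · show jackson i 0 ∈ _
      rw [jackson_zero]
      exact Submodule.zero_mem _
    · intro x y _ _ hpx hpy
      show jackson i (x + y) ∈ _
      rw [jackson_add]
      exact Submodule.add_mem _ hpx hpy
    · intro c x _ hpx
      show jackson i (c • x) ∈ _
      rw [jackson_smul]
      exact Submodule.smul_mem _ _ hpx
  · intro V₁ V₂ _ _ hJ1 hJ2 hinf _
    by_contra hcon
    push_neg at hcon
    obtain ⟨h1ne, h2ne⟩ := hcon
    obtain ⟨f₁, hf₁, hf₁0⟩ := Submodule.ne_bot_iff V₁ |>.1 h1ne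
    obtain ⟨f₂, hf₂, hf₂0⟩ := Submodule.ne_bot_iff V₂ |>.1 h2ne
    have h1mem : (1 : MvPolynomial (Fin n) (RatFunc ℚ)) ∈ V₁ :=
      one_mem_of_invariant V₁ hJ1 f₁.totalDegree f₁ hf₁ hf₁0 le_rfl
    have h2mem : (1 : MvPolynomial (Fin n) (RatFunc ℚ)) ∈ V₂ :=
      one_mem_of_invariant V₂ hJ2 f₂.totalDegree f₂ hf₂ hf₂0 le_rfl
    have hmem : (1 : MvPolynomial (Fin n) (RatFunc ℚ)) ∈ V₁ ⊓ V₂ := ⟨h1mem, h2mem⟩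
    rw [hinf] at hmem
    exact one_ne_zero ((Submodule.mem_bot _).1 hmem)
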